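/- Let A and B be symmetric n×n real matrices with eigenvalues λ₁(A) ≥ … ≥ λₙ(A) and λ₁(B) ≥ … ≥ λₙ(B) arranged in decreasing order. Then for each i, |λᵢ(A) - λᵢ(B)| ≤ ‖A - B‖, where ‖·‖ is the Frobenius norm; moreover (Σᵢ (λᵢ(A)-λᵢ(B))²)^{1/2} ≤ ‖A-B‖. -/

import Mathlib

open Matrix Finset

lemma trace_diag_mul {n : ℕ} (f g : Fin n → ℝ) (W : Matrix (Fin n) (Fin n) ℝ) :
    Matrix.trace (diagonal f * W * diagonal g * Wᵀ) = ∑ i, ∑ j, f i * g j * (W i j)^2 := by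
  simp only [Matrix.trace, Matrix.diag, mul_apply, diagonal_apply, transpose_apply,
    Finset.sum_mul, Finset.mul_sum]
  simp [Finset.sum_ite_eq, Finset.sum_ite_eq', Finset.mul_sum]
  congr 1; ext i; congr 1; ext j; ring

lemma trace_mul_eq {n : ℕ} {A B : Matrix (Fin n) (Fin n) ℝ}
    (hA : A.IsHermitian) (hB : B.IsHermitian) :
    Matrix.trace (A * B) = ∑ i, ∑ j, hA.eigenvalues i * hB.eigenvalues j *
      (((star (hA.eigenvectorUnitary : Matrix (Fin n) (Fin n) ℝ)) *
        (hB.eigenvectorUnitary : Matrix (Fin n) (Fin n) ℝ)) i j)^2 := by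
  set U := (hA.eigenvectorUnitary : Matrix (Fin n) (Fin n) ℝ)
  set V := (hB.eigenvectorUnitary : Matrix (Fin n) (Fin n) ℝ)
  set W := star U * V with hW
  have hsW : Wᵀ = star V * U := by
    rw [hW]; simp [star_eq_conjTranspose, conjTranspose_mul,
      ← conjTranspose_eq_transpose_of_trivial]
  have h1 : A * B = U * (diagonal hA.eigenvalues * W * diagonal hB.eigenvalues) * star V := by
    conv_lhs => rw [hA.spectral_theorem, hB.spectral_theorem]
    simp only [RCLike.ofReal_real_eq_id, Function.comp_def, id, Unitary.conjStarAlgAut_apply]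
    rw [hW]; noncomm_ring
  rw [h1, Matrix.trace_mul_cycle, ← hsW]
  rw [Matrix.trace_mul_comm]
  exact trace_diag_mul _ _ _

lemma perm_sum_bound {n : ℕ} {μA μB lam mu : Fin n → ℝ} (hmono : Monovary μA μB)
    (σA σB : Equiv.Perm (Fin n)) (hAe : μA = lam ∘ σA) (hBe : μB = mu ∘ σB)
    (σ : Equiv.Perm (Fin n)) :
    ∑ i, lam i * mu (σ i) ≤ ∑ i, μA i * μB i := by
  have h1 : ∑ i, lam i * mu (σ i) = ∑ k, μA k * μB ((σB⁻¹ * σ * σA) k) := by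
    rw [← Equiv.sum_comp σA (fun i => lam i * mu (σ i))]
    refine Finset.sum_congr rfl fun k _ => ?_
    simp [hAe, hBe, Equiv.Perm.mul_apply]
  rw [h1]
  exact hmono.sum_mul_comp_perm_le_sum_mul

lemma ds_sum_bound {n : ℕ} {μA μB lam mu : Fin n → ℝ} (hmono : Monovary μA μB)
    (σA σB : Equiv.Perm (Fin n)) (hAe : μA = lam ∘ σA) (hBe : μB = mu ∘ σB)
    {S : Matrix (Fin n) (Fin n) ℝ} (hS : S ∈ doublyStochastic ℝ (Fin n)) :
    ∑ i, ∑ j, lam i * mu j * S i j ≤ ∑ i, μA i * μB i := by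
  obtain ⟨w, hw0, hw1, hwS⟩ := exists_eq_sum_perm_of_mem_doublyStochastic hS
  have hSe : ∀ i j, S i j = ∑ σ : Equiv.Perm (Fin n), w σ * σ.permMatrix ℝ i j := by
    intro i j
    rw [← hwS]; simp only [Matrix.sum_apply, Matrix.smul_apply, smul_eq_mul]
  calc ∑ i, ∑ j, lam i * mu j * S i j
      = ∑ i, ∑ j, ∑ σ : Equiv.Perm (Fin n), w σ * (lam i * mu j * σ.permMatrix ℝ i j) := by
        refine Finset.sum_congr rfl fun i _ => Finset.sum_congr rfl fun j _ => ?_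
        rw [hSe, Finset.mul_sum]
        exact Finset.sum_congr rfl fun σ _ => by ring
    _ = ∑ i, ∑ σ : Equiv.Perm (Fin n), ∑ j, w σ * (lam i * mu j * σ.permMatrix ℝ i j) := by
        exact Finset.sum_congr rfl fun i _ => Finset.sum_comm
    _ = ∑ σ : Equiv.Perm (Fin n), ∑ i, ∑ j, w σ * (lam i * mu j * σ.permMatrix ℝ i j) :=
        Finset.sum_comm
    _ = ∑ σ : Equiv.Perm (Fin n), w σ * ∑ i, ∑ j, lam i * mu j * σ.permMatrix ℝ i j := by
        simp [Finset.mul_sum]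
    _ ≤ ∑ σ : Equiv.Perm (Fin n), w σ * ∑ i, μA i * μB i := by
        refine Finset.sum_le_sum fun σ _ => mul_le_mul_of_nonneg_left ?_ (hw0 σ)
        calc ∑ i, ∑ j, lam i * mu j * σ.permMatrix ℝ i j
            = ∑ i, lam i * mu (σ i) := by
              refine Finset.sum_congr rfl fun i _ => ?_
              simp [Equiv.Perm.permMatrix, PEquiv.toMatrix_apply, Equiv.toPEquiv_apply,
                mul_ite, Finset.sum_ite_eq]
          _ ≤ ∑ i, μA i * μB i := perm_sum_bound hmono σA σB hAe hBe σ
    _ = ∑ i, μA i * μB i := by rw [← Finset.sum_mul, hw1, one_mul]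

/-- Frobenius norm. -/
noncomputable def frob {n : ℕ} (A : Matrix (Fin n) (Fin n) ℝ) : ℝ :=
  Real.sqrt (Matrix.trace (Aᵀ * A))

/-- Eigenvalue perturbation (Weyl / Hoffman–Wielandt type) bound: if `μA` and `μB`
list the eigenvalues of the symmetric matrices `A` and `B` with multiplicity in
decreasing order, then `|μA i - μB i| ≤ ‖A-B‖` for each `i` and moreover
`(Σᵢ (μA i - μB i)²)^{1/2} ≤ ‖A-B‖` in the Frobenius norm. -/
theorem stmt12 {n : ℕ} (A B : Matrix (Fin n) (Fin n) ℝ)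
    (hA : A.IsHermitian) (hB : B.IsHermitian)
    (μA μB : Fin n → ℝ) (hμA : Antitone μA) (hμB : Antitone μB)
    (σA : Equiv.Perm (Fin n)) (hAe : μA = hA.eigenvalues ∘ σA)
    (σB : Equiv.Perm (Fin n)) (hBe : μB = hB.eigenvalues ∘ σB) :
    (∀ i, |μA i - μB i| ≤ frob (A - B)) ∧
      Real.sqrt (∑ i, (μA i - μB i) ^ 2) ≤ frob (A - B) := by
  -- the unitary W = Uᵀ V and the doubly stochastic matrix of its squared entries
  set U := (hA.eigenvectorUnitary : Matrix (Fin n) (Fin n) ℝ) with hU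
  set V := (hB.eigenvectorUnitary : Matrix (Fin n) (Fin n) ℝ) with hV
  set W := star U * V with hW
  have hWmem : W ∈ Matrix.unitaryGroup (Fin n) ℝ := by
    rw [hW, hU, hV]
    exact mul_mem (Unitary.star_mem hA.eigenvectorUnitary.2) hB.eigenvectorUnitary.2
  have hrow : ∀ i, ∑ j, (W i j)^2 = 1 := by
    intro i
    have h1 : (W * star W) i i = (1 : Matrix (Fin n) (Fin n) ℝ) i i := by
      rw [(Matrix.mem_unitaryGroup_iff).mp hWmem]
    simpa [mul_apply, star_eq_conjTranspose, conjTranspose_apply, sq, one_apply] using h1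
  have hcol : ∀ j, ∑ i, (W i j)^2 = 1 := by
    intro j
    have h1 : (star W * W) j j = (1 : Matrix (Fin n) (Fin n) ℝ) j j := by
      rw [(Matrix.mem_unitaryGroup_iff').mp hWmem]
    simpa [mul_apply, star_eq_conjTranspose, conjTranspose_apply, sq, one_apply,
      mul_comm] using h1
  have hS : (Matrix.of fun i j => (W i j)^2) ∈ doublyStochastic ℝ (Fin n) := by
    rw [mem_doublyStochastic_iff_sum]
    exact ⟨fun i j => sq_nonneg _, hrow, hcol⟩
  -- trace identities
  have htrA : Matrix.trace (A * A) = ∑ i, (μA i)^2 := by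
    have hsum : ∑ i, (μA i)^2 = ∑ i, hA.eigenvalues i ^ 2 := by
      simp only [hAe, Function.comp_apply]
      exact Equiv.sum_comp σA (fun i => hA.eigenvalues i ^ 2)
    rw [trace_mul_eq hA hA, (Matrix.mem_unitaryGroup_iff').mp hA.eigenvectorUnitary.2, hsum]
    refine Finset.sum_congr rfl fun i _ => ?_
    simp [one_apply, apply_ite (· ^ 2), mul_ite, Finset.sum_ite_eq, sq]
  have htrB : Matrix.trace (B * B) = ∑ i, (μB i)^2 := by
    have hsum : ∑ i, (μB i)^2 = ∑ i, hB.eigenvalues i ^ 2 := by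
      simp only [hBe, Function.comp_apply]
      exact Equiv.sum_comp σB (fun i => hB.eigenvalues i ^ 2)
    rw [trace_mul_eq hB hB, (Matrix.mem_unitaryGroup_iff').mp hB.eigenvectorUnitary.2, hsum]
    refine Finset.sum_congr rfl fun i _ => ?_
    simp [one_apply, apply_ite (· ^ 2), mul_ite, Finset.sum_ite_eq, sq]
  have htrAB : Matrix.trace (A * B) ≤ ∑ i, μA i * μB i := by
    rw [trace_mul_eq hA hB]
    exact ds_sum_bound (hμA.monovary hμB) σA σB hAe hBe hS
  -- the key inequality
  have hABsymm : (A - B)ᵀ = A - B := by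
    rw [← conjTranspose_eq_transpose_of_trivial, (hA.sub hB).eq]
  have key : ∑ i, (μA i - μB i)^2 ≤ Matrix.trace ((A - B)ᵀ * (A - B)) := by
    rw [hABsymm]
    have hexp : Matrix.trace ((A - B) * (A - B)) =
        Matrix.trace (A * A) + Matrix.trace (B * B) - 2 * Matrix.trace (A * B) := by
      rw [Matrix.sub_mul, Matrix.mul_sub, Matrix.mul_sub, Matrix.trace_sub, Matrix.trace_sub,
        Matrix.trace_sub, Matrix.trace_mul_comm B A]
      ring
    rw [hexp, htrA, htrB]
    have : ∑ i, (μA i - μB i)^2 =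
        ∑ i, (μA i)^2 + ∑ i, (μB i)^2 - 2 * ∑ i, μA i * μB i := by
      rw [← Finset.sum_add_distrib, Finset.mul_sum, ← Finset.sum_sub_distrib]
      refine Finset.sum_congr rfl fun i _ => by ring
    rw [this]
    linarith [htrAB]
  have hsq : Real.sqrt (∑ i, (μA i - μB i) ^ 2) ≤ frob (A - B) :=
    Real.sqrt_le_sqrt key
  refine ⟨fun i => ?_, hsq⟩
  have h1 : (μA i - μB i)^2 ≤ ∑ j, (μA j - μB j)^2 :=
    Finset.single_le_sum (f := fun j => (μA j - μB j)^2) (fun j _ => sq_nonneg _) (Finset.mem_univ i)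
  calc |μA i - μB i| = Real.sqrt ((μA i - μB i)^2) := (Real.sqrt_sq_eq_abs _).symm
    _ ≤ Real.sqrt (∑ j, (μA j - μB j)^2) := Real.sqrt_le_sqrt h1
    _ ≤ frob (A - B) := hsq
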